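/- For a > 0 and Re(s) > 0, ∫_R e^{−πi a x²} |x|^{s} dx/|x| = a^{−s/2} e^{−sπi/4} Γ(s/2) / π^{s/2}, where the integral is understood as the limit of the absolutely convergent integrals ∫_R e^{−πi(a−iε)x²}|x|^{s−1} dx as ε → 0⁺. -/

import Mathlib

open MeasureTheory Real Filter Set
open scoped Topology

set_option maxHeartbeats 1000000

/-! Auxiliary lemmas -/

private lemma aux_integrableOn_rpow_exp {r : ℝ} (hr : -1 < r) {c : ℝ} (hc : 0 < c) :
    IntegrableOn (fun t : ℝ => t ^ r * Real.exp (-c * t)) (Ioi 0) := by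
  simpa using integrableOn_rpow_mul_exp_neg_mul_rpow hr one_pos hc

private lemma aux_aesm (w b : ℂ) :
    AEStronglyMeasurable (fun t : ℝ => (t : ℂ) ^ (w - 1) * Complex.exp (-b * t))
      (volume.restrict (Ioi 0)) := by
  apply ContinuousOn.aestronglyMeasurable _ measurableSet_Ioi
  refine ContinuousOn.mul ?_ ?_
  · intro t ht
    exact ((continuousAt_cpow_const (Complex.ofReal_mem_slitPlane.mpr ht)).comp
      Complex.continuous_ofReal.continuousAt).continuousWithinAt
  · exact (Complex.continuous_exp.comp
      (continuous_const.mul Complex.continuous_ofReal)).continuousOn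

private lemma aux_aesm' (w b : ℂ) :
    AEStronglyMeasurable (fun t : ℝ => (t : ℂ) ^ (w - 1) * (-(t : ℂ) * Complex.exp (-b * t)))
      (volume.restrict (Ioi 0)) := by
  apply ContinuousOn.aestronglyMeasurable _ measurableSet_Ioi
  refine ContinuousOn.mul ?_ ?_
  · intro t ht
    exact ((continuousAt_cpow_const (Complex.ofReal_mem_slitPlane.mpr ht)).comp
      Complex.continuous_ofReal.continuousAt).continuousWithinAt
  · exact ((Complex.continuous_ofReal.neg).mul
      (Complex.continuous_exp.comp
        (continuous_const.mul Complex.continuous_ofReal))).continuousOn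

private lemma aux_norm_eq {w : ℂ} {t : ℝ} (ht : 0 < t) (b : ℂ) :
    ‖(t : ℂ) ^ (w - 1) * Complex.exp (-b * t)‖ = t ^ (w.re - 1) * Real.exp (-(b.re * t)) := by
  rw [norm_mul,
    Complex.norm_cpow_eq_rpow_re_of_pos ht, Complex.norm_exp]
  have h1 : (w - 1).re = w.re - 1 := by simp
  have h2 : (-b * (t:ℂ)).re = -(b.re * t) := by simp [Complex.mul_re]
  rw [h1, h2]

private lemma aux_integrable {w : ℂ} (hw : 0 < w.re) {b : ℂ} (hb : 0 < b.re) :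
    IntegrableOn (fun t : ℝ => (t : ℂ) ^ (w - 1) * Complex.exp (-b * t)) (Ioi 0) := by
  apply Integrable.mono' (aux_integrableOn_rpow_exp (by linarith : (-1:ℝ) < w.re - 1) hb)
    (aux_aesm w b)
  filter_upwards [ae_restrict_mem measurableSet_Ioi] with t ht
  rw [aux_norm_eq ht b, neg_mul]

private lemma aux_differentiableAt (w : ℂ) (hw : 0 < w.re) {b₀ : ℂ} (hb₀ : 0 < b₀.re) :
    DifferentiableAt ℂ
      (fun b => ∫ t : ℝ in Ioi 0, (t : ℂ) ^ (w - 1) * Complex.exp (-b * t)) b₀ := by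
  have hε : 0 < b₀.re / 2 := half_pos hb₀
  have h_bound : ∀ᵐ (t : ℝ) ∂(volume.restrict (Ioi (0:ℝ))), ∀ b ∈ Metric.ball b₀ (b₀.re / 2),
      ‖(t : ℂ) ^ (w - 1) * (-(t : ℂ) * Complex.exp (-b * t))‖
        ≤ t ^ w.re * Real.exp (-(b₀.re / 2) * t) := by
    filter_upwards [ae_restrict_mem measurableSet_Ioi] with t ht b hb
    have htp : 0 < t := ht
    have hbre : b₀.re / 2 ≤ b.re := by
      have h1 : ‖b - b₀‖ < b₀.re / 2 := by
        simpa [Complex.dist_eq] using hb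
      have h2 : |b.re - b₀.re| ≤ ‖b - b₀‖ := by
        simpa using Complex.abs_re_le_norm (b - b₀)
      have := abs_le.mp (h2.trans h1.le)
      linarith [this.1]
    have hnorm : ‖(t : ℂ) ^ (w - 1) * (-(t : ℂ) * Complex.exp (-b * t))‖
        = t ^ w.re * Real.exp (-(b.re * t)) := by
      have h3 : (w - 1).re = w.re - 1 := by simp [Complex.sub_re]
      have e1 : ‖(t : ℂ) ^ (w - 1)‖ = t ^ (w.re - 1) := by
        rw [Complex.norm_cpow_eq_rpow_re_of_pos htp, h3]
      have e2 : ‖-(t : ℂ)‖ = t := by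
        rw [norm_neg, Complex.norm_real, Real.norm_eq_abs, abs_of_pos htp]
      have h4 : (-b * (t : ℂ)).re = -(b.re * t) := by simp [Complex.mul_re]
      have e3 : ‖Complex.exp (-b * t)‖ = Real.exp (-(b.re * t)) := by
        rw [Complex.norm_exp, h4]
      rw [norm_mul, norm_mul, e1, e2, e3, ← mul_assoc,
        ← Real.rpow_add_one htp.ne', sub_add_cancel]
    rw [hnorm]
    apply mul_le_mul_of_nonneg_left _ (Real.rpow_nonneg htp.le _)
    apply Real.exp_le_exp.mpr
    nlinarith
  have h_bint : Integrable (fun t : ℝ => t ^ w.re * Real.exp (-(b₀.re / 2) * t))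
      (volume.restrict (Ioi (0:ℝ))) :=
    aux_integrableOn_rpow_exp (by linarith) hε
  have h_diff : ∀ᵐ (t : ℝ) ∂(volume.restrict (Ioi (0:ℝ))), ∀ b ∈ Metric.ball b₀ (b₀.re / 2),
      HasDerivAt (fun b : ℂ => (t : ℂ) ^ (w - 1) * Complex.exp (-b * t))
        ((t : ℂ) ^ (w - 1) * (-(t : ℂ) * Complex.exp (-b * t))) b := by
    apply Filter.Eventually.of_forall
    intro t b _
    have h := ((((hasDerivAt_id b).neg.mul_const (t : ℂ)).cexp).const_mul
      ((t : ℂ) ^ (w - 1)))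
    refine h.congr_deriv ?_
    simp only [Pi.neg_apply, id_eq]
    ring
  obtain ⟨-, hd⟩ := hasDerivAt_integral_of_dominated_loc_of_deriv_le
    (Metric.ball_mem_nhds b₀ hε)
    (Filter.Eventually.of_forall fun b => aux_aesm w b)
    (aux_integrable hw hb₀)
    (aux_aesm' w b₀)
    h_bound h_bint h_diff
  exact hd.differentiableAt

private lemma aux_key {w : ℂ} (hw : 0 < w.re) {b : ℂ} (hb : 0 < b.re) :
    ∫ t : ℝ in Ioi 0, (t : ℂ) ^ (w - 1) * Complex.exp (-b * t)
      = b ^ (-w) * Complex.Gamma w := by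
  set f : ℂ → ℂ := fun b => ∫ t : ℝ in Ioi 0, (t : ℂ) ^ (w - 1) * Complex.exp (-b * t) with hf
  set g : ℂ → ℂ := fun b => b ^ (-w) * Complex.Gamma w with hg
  set U : Set ℂ := {z : ℂ | 0 < z.re} with hU
  have hUo : IsOpen U := isOpen_lt continuous_const Complex.continuous_re
  have hfa : AnalyticOnNhd ℂ f U :=
    DifferentiableOn.analyticOnNhd
      (fun b hb => (aux_differentiableAt w hw hb).differentiableWithinAt) hUo
  have hga : AnalyticOnNhd ℂ g U := by
    apply DifferentiableOn.analyticOnNhd _ hUo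
    intro b hb
    exact ((differentiableAt_id.cpow (differentiableAt_const (-w))
      (Complex.mem_slitPlane_iff.mpr (Or.inl hb))).mul_const (Complex.Gamma w)).differentiableWithinAt
  have hreal : ∀ r : ℝ, 0 < r → f r = g r := by
    intro r hr
    have h1 := Complex.integral_cpow_mul_exp_neg_mul_Ioi hw hr
    have h2 : f r = ∫ t : ℝ in Ioi 0, (t : ℂ) ^ (w - 1) * Complex.exp (-((r : ℂ) * t)) := by
      simp only [hf, neg_mul]
    rw [h2, h1, hg]
    congr 1
    rw [one_div, Complex.inv_cpow _ _ (by
      rw [Complex.arg_ofReal_of_nonneg hr.le]; exact (Real.pi_ne_zero).symm),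
      ← Complex.cpow_neg]
  have hu : Tendsto (fun n : ℕ => ((1 + ((n : ℝ) + 1)⁻¹ : ℝ) : ℂ)) atTop (𝓝[≠] (1 : ℂ)) := by
    apply tendsto_nhdsWithin_of_tendsto_nhds_of_eventually_within
    · have h0 : Tendsto (fun n : ℕ => (1 + ((n : ℝ) + 1)⁻¹ : ℝ)) atTop (𝓝 1) := by
        have := (tendsto_one_div_add_atTop_nhds_zero_nat : Tendsto (fun n : ℕ => 1 / ((n : ℝ) + 1)) atTop (𝓝 0))
        simp only [one_div] at this
        simpa using tendsto_const_nhds.add this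
      have := (Complex.continuous_ofReal.tendsto (1 : ℝ)).comp h0
      simpa [Function.comp_def] using this
    · apply Filter.Eventually.of_forall
      intro n
      simp only [mem_compl_iff, mem_singleton_iff]
      intro h
      have : (1 + ((n : ℝ) + 1)⁻¹ : ℝ) = 1 := by exact_mod_cast h
      have hpos : 0 < ((n : ℝ) + 1)⁻¹ := by positivity
      linarith
  have hfreq : ∃ᶠ z in 𝓝[≠] (1 : ℂ), f z = g z := by
    apply hu.frequently
    apply Filter.Frequently.of_forall
    intro n
    exact hreal _ (by positivity)
  have heq : EqOn f g U :=
    hfa.eqOn_of_preconnected_of_frequently_eq hga (convex_halfSpace_re_gt 0).isPreconnected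
      (by simp [hU]) hfreq
  exact heq hb

private lemma aux_even_integral (h : ℝ → ℂ) (he : ∀ x, h (-x) = h x) (hi : Integrable h) :
    ∫ x, h x = 2 * ∫ x in Ioi (0:ℝ), h x := by
  have hsplit : ∫ x, h x = (∫ x in Iic (0:ℝ), h x) + ∫ x in Ioi (0:ℝ), h x := by
    rw [← setIntegral_union (Iic_disjoint_Ioi le_rfl) measurableSet_Ioi
      hi.integrableOn hi.integrableOn, Iic_union_Ioi, MeasureTheory.Measure.restrict_univ]
  have hneg : ∫ x in Iic (0:ℝ), h x = ∫ x in Ioi (0:ℝ), h x := by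
    rw [show (Ioi (0:ℝ)) = Ioi (-(0:ℝ)) by norm_num, ← integral_comp_neg_Iic]
    exact setIntegral_congr_fun measurableSet_Iic fun x _ => (he x).symm
  rw [hsplit, hneg]; ring

private lemma aux_gauss {b : ℂ} (hb : 0 < b.re) {s : ℂ} (hs : 0 < s.re) :
    (∫ x : ℝ, Complex.exp (-b * (x : ℂ) ^ 2) * ((|x| : ℝ) : ℂ) ^ (s - 1))
      = b ^ (-(s / 2)) * Complex.Gamma (s / 2) := by
  set h : ℝ → ℂ := fun x => Complex.exp (-b * (x : ℂ) ^ 2) * ((|x| : ℝ) : ℂ) ^ (s - 1) with hh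
  have he : ∀ x, h (-x) = h x := by
    intro x
    simp only [hh, Complex.ofReal_neg, abs_neg, neg_sq]
  have hIoi : IntegrableOn h (Ioi 0) := by
    apply Integrable.mono'
      (g := fun x : ℝ => x ^ (s.re - 1) * Real.exp (-b.re * x ^ 2))
      (integrableOn_rpow_mul_exp_neg_mul_sq hb (by linarith : (-1:ℝ) < s.re - 1))
    · apply ContinuousOn.aestronglyMeasurable _ measurableSet_Ioi
      apply ContinuousOn.mul
      · exact (Complex.continuous_exp.comp (by continuity)).continuousOn
      · intro t ht
        have hA : ContinuousAt (fun x : ℝ => ((|x| : ℝ) : ℂ)) t :=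
          (Complex.continuous_ofReal.comp continuous_abs).continuousAt
        have h1 : ContinuousAt ((fun z : ℂ => z ^ (s - 1)) ∘ (fun x : ℝ => ((|x| : ℝ) : ℂ))) t :=
          ContinuousAt.comp (continuousAt_cpow_const (Complex.ofReal_mem_slitPlane.mpr
            (abs_pos.mpr (ne_of_gt (show (0:ℝ) < t from ht))))) hA
        exact h1.continuousWithinAt
    · filter_upwards [ae_restrict_mem measurableSet_Ioi] with x hx
      have hxp : 0 < x := hx
      have hre : (-b * (x : ℂ) ^ 2).re = -b.re * x ^ 2 := by
        simp [pow_two, Complex.mul_re, Complex.mul_im]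
      rw [hh]
      simp only
      rw [norm_mul, Complex.norm_exp, hre,
        abs_of_pos hxp, Complex.norm_cpow_eq_rpow_re_of_pos hxp]
      have h3 : (s - 1).re = s.re - 1 := by simp [Complex.sub_re]
      rw [h3, mul_comm]
  have hmeas : AEStronglyMeasurable h volume := by
    have hm : Measurable (fun x : ℝ =>
        Complex.exp (-b * (x : ℂ) ^ 2) * Complex.exp (Complex.log ((|x| : ℝ) : ℂ) * (s - 1))) := by
      refine Measurable.mul ?_ ?_
      · exact (Complex.continuous_exp.comp
          (continuous_const.mul (Complex.continuous_ofReal.pow 2))).measurable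
      · exact Complex.measurable_exp.comp
          ((Complex.measurable_log.comp
            (Complex.measurable_ofReal.comp measurable_norm)).mul measurable_const)
    apply (hm.aestronglyMeasurable).congr
    have hnull : {(0:ℝ)}ᶜ ∈ ae (volume : Measure ℝ) := by
      rw [mem_ae_iff, compl_compl]
      exact Real.volume_singleton
    filter_upwards [hnull] with x hx
    have hx0 : x ≠ 0 := hx
    have habs : ((|x| : ℝ) : ℂ) ≠ 0 := by
      simp [abs_eq_zero, hx0]
    rw [hh]
    simp only
    rw [Complex.cpow_def_of_ne_zero habs]
  have hint : Integrable h := by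
    have hIic : IntegrableOn h (Iic 0) := by
      rw [← Measure.map_neg_eq_self (volume : Measure ℝ)]
      have m : MeasurableEmbedding fun x : ℝ => -x :=
        (Homeomorph.neg ℝ).measurableEmbedding
      rw [m.integrableOn_map_iff]
      simp only [Function.comp_def, he, neg_preimage, neg_Iic, neg_zero]
      exact Iff.mpr integrableOn_Ici_iff_integrableOn_Ioi hIoi
    have := hIic.union hIoi
    rwa [Iic_union_Ioi, integrableOn_univ] at this
  have step1 : ∫ x, h x = 2 * ∫ x in Ioi (0:ℝ), h x := aux_even_integral h he hint
  have step2 : (∫ x in Ioi (0:ℝ), h x)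
      = mellin (fun t : ℝ => Complex.exp (-b * (t : ℂ) ^ 2)) s := by
    rw [mellin]
    apply setIntegral_congr_fun measurableSet_Ioi
    intro x hx
    rw [hh]
    simp only [smul_eq_mul, abs_of_pos (show (0:ℝ) < x from hx)]
    ring
  have step3 : mellin (fun t : ℝ => Complex.exp (-b * (t : ℂ) ^ 2)) s
      = |(2:ℝ)|⁻¹ • mellin (fun u : ℝ => Complex.exp (-b * u)) (s / 2) := by
    have hfun : (fun t : ℝ => Complex.exp (-b * (t : ℂ) ^ 2))
        = fun t : ℝ => (fun u : ℝ => Complex.exp (-b * u)) (t ^ (2:ℝ)) := by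
      funext t
      have : (t ^ (2:ℝ) : ℝ) = t ^ 2 := by
        rw [show (2:ℝ) = ((2:ℕ) : ℝ) by norm_num, Real.rpow_natCast]
      rw [this]
      push_cast
      ring_nf
    rw [hfun]
    have h6 := mellin_comp_rpow (fun u : ℝ => Complex.exp (-b * u)) s (2:ℝ)
    rw [h6]
    norm_num
  have step4 : mellin (fun u : ℝ => Complex.exp (-b * u)) (s / 2)
      = b ^ (-(s / 2)) * Complex.Gamma (s / 2) := by
    rw [mellin]
    simp_rw [smul_eq_mul]
    have h5 : 0 < (s / 2).re := by
      have : (s / 2).re = s.re / 2 := by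
        rw [Complex.div_re]
        simp
        ring
      rw [this]; positivity
    exact aux_key h5 hb
  rw [step1, step2, step3, step4, show |(2:ℝ)| = 2 by norm_num, Complex.real_smul]
  push_cast
  ring

private lemma aux_mul_I_cpow {r : ℝ} (hr : 0 < r) (z : ℂ) :
    ((r : ℂ) * Complex.I) ^ z = (r : ℂ) ^ z * Complex.exp (z * ((π : ℂ) / 2) * Complex.I) := by
  have hr0 : (r : ℂ) ≠ 0 := Complex.ofReal_ne_zero.mpr hr.ne'
  have hne : (r : ℂ) * Complex.I ≠ 0 := mul_ne_zero hr0 Complex.I_ne_zero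
  have harg : (r : ℂ).arg + Complex.I.arg ∈ Set.Ioc (-π) π := by
    rw [Complex.arg_ofReal_of_nonneg hr.le, Complex.arg_I]
    constructor
    · linarith [Real.pi_pos]
    · linarith [Real.pi_pos]
  rw [Complex.cpow_def_of_ne_zero hne, Complex.log_mul hr0 Complex.I_ne_zero harg,
    Complex.log_I, Complex.cpow_def_of_ne_zero hr0, add_mul, Complex.exp_add]
  congr 1
  ring_nf

/-- For `a > 0` and `Re s > 0`,
`∫_ℝ e^{−πi a x²} |x|^s dx/|x| = a^{−s/2} e^{−sπi/4} Γ(s/2)/π^{s/2}`,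
the integral being understood as the limit, as `ε → 0⁺`, of the absolutely
convergent integrals `∫_ℝ e^{−πi(a−iε)x²} |x|^{s−1} dx`. -/
theorem mellin_real_second_degree_character (a : ℝ) (ha : 0 < a)
    (s : ℂ) (hs : 0 < s.re) :
    Tendsto
      (fun ε : ℝ =>
        ∫ x : ℝ,
          Complex.exp (-(π : ℂ) * Complex.I * ((a : ℂ) - (ε : ℂ) * Complex.I) * (x : ℂ) ^ 2)
            * ((|x| : ℝ) : ℂ) ^ (s - 1))
      (nhdsWithin 0 (Set.Ioi 0))
      (nhds ((a : ℂ) ^ (-s / 2) * Complex.exp (-s * (π : ℂ) * Complex.I / 4)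
        * Complex.Gamma (s / 2) / (π : ℂ) ^ (s / 2))) := by
  have key : ∀ ε : ℝ, 0 < ε →
      (∫ x : ℝ,
          Complex.exp (-(π : ℂ) * Complex.I * ((a : ℂ) - (ε : ℂ) * Complex.I) * (x : ℂ) ^ 2)
            * ((|x| : ℝ) : ℂ) ^ (s - 1))
        = ((π : ℂ) * Complex.I * ((a : ℂ) - (ε : ℂ) * Complex.I)) ^ (-(s / 2))
            * Complex.Gamma (s / 2) := by
    intro ε hε
    have hre : ((π : ℂ) * Complex.I * ((a : ℂ) - (ε : ℂ) * Complex.I)).re = π * ε := by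
      simp [Complex.mul_re, Complex.mul_im, Complex.sub_re, Complex.sub_im]
    have hb : 0 < ((π : ℂ) * Complex.I * ((a : ℂ) - (ε : ℂ) * Complex.I)).re := by
      rw [hre]; positivity
    have hg := aux_gauss hb hs
    simp only [neg_mul] at hg ⊢
    exact hg
  have hcont : Tendsto (fun ε : ℝ => (π : ℂ) * Complex.I * ((a : ℂ) - (ε : ℂ) * Complex.I))
      (𝓝[>] (0:ℝ)) (𝓝 ((π : ℂ) * Complex.I * (a : ℂ))) := by
    have hc : Continuous fun ε : ℝ => (π : ℂ) * Complex.I * ((a : ℂ) - (ε : ℂ) * Complex.I) :=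
      continuous_const.mul (continuous_const.sub (Complex.continuous_ofReal.mul continuous_const))
    have := hc.tendsto 0
    simp only [Complex.ofReal_zero, zero_mul, sub_zero] at this
    exact this.mono_left nhdsWithin_le_nhds
  have hslit : (π : ℂ) * Complex.I * (a : ℂ) ∈ Complex.slitPlane := by
    apply Complex.mem_slitPlane_iff.mpr
    right
    have him : ((π : ℂ) * Complex.I * (a : ℂ)).im = π * a := by
      simp [Complex.mul_im, Complex.mul_re]
    rw [him]
    positivity
  have hval : ((π : ℂ) * Complex.I * (a : ℂ)) ^ (-(s / 2)) * Complex.Gamma (s / 2)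
      = (a : ℂ) ^ (-s / 2) * Complex.exp (-s * (π : ℂ) * Complex.I / 4)
        * Complex.Gamma (s / 2) / (π : ℂ) ^ (s / 2) := by
    rw [show (π : ℂ) * Complex.I * (a : ℂ) = ((π * a : ℝ) : ℂ) * Complex.I by push_cast; ring,
      aux_mul_I_cpow (mul_pos Real.pi_pos ha), Complex.ofReal_mul,
      Complex.mul_cpow_ofReal_nonneg Real.pi_pos.le ha.le,
      show (-(s / 2)) * ((π : ℂ) / 2) * Complex.I = -s * (π : ℂ) * Complex.I / 4 by ring,
      show -s / 2 = -(s / 2) from neg_div 2 s,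
      show ((π : ℝ) : ℂ) ^ (-(s / 2)) = (((π : ℝ) : ℂ) ^ (s / 2))⁻¹ from Complex.cpow_neg _ _,
      div_eq_mul_inv]
    ring
  have hT : Tendsto
      (fun ε : ℝ => ((π : ℂ) * Complex.I * ((a : ℂ) - (ε : ℂ) * Complex.I)) ^ (-(s / 2))
        * Complex.Gamma (s / 2))
      (𝓝[>] (0:ℝ))
      (𝓝 ((a : ℂ) ^ (-s / 2) * Complex.exp (-s * (π : ℂ) * Complex.I / 4)
        * Complex.Gamma (s / 2) / (π : ℂ) ^ (s / 2))) := by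
    rw [← hval]
    exact (Tendsto.comp (continuousAt_cpow_const hslit) hcont).mul_const _
  apply hT.congr'
  filter_upwards [self_mem_nhdsWithin] with ε hε
  exact (key ε hε).symm
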